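/- Every symbol algebra of a non-degenerated parabolic (3,5,6)-distribution is isomorphic, as a graded Lie algebra, to exactly one of g⁰ or g¹. Formally: let g = g₋₁ ⊕ g₋₂ ⊕ g₋₃ ⊕ g₋₄ ⊕ g₋₅ ⊕ g₋₇ be a graded real Lie algebra with dim g₋ᵢ = 1 for i ∈ {1,2,3,4,5,7}, generated by g₋₁ ⊕ g₋₂ ⊕ g₋₃, with [g₋₁, g₋₂] = 0, [g₋₁, g₋₃] = g₋₄, [g₋₁, g₋₄] = 0, [g₋₂, g₋₃] = g₋₅, [g₋₂, g₋₅] = g₋₇. Then there is a basis e₁,…,e₅,e₇ with eᵢ ∈ g₋ᵢ such that the only nonzero brackets are [e₁,e₃]=e₄, [e₂,e₃]=e₅, [e₂,e₅]=e₇, and [e₃,e₄]=d·e₇ with d = 0 or d = 1. -/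
import Mathlib

/-- A submodule of finrank one is spanned by a nonzero vector. -/
lemma aux_span_of_finrank_one {g : Type*} [AddCommGroup g] [Module ℝ g]
    (W : Submodule ℝ g) (h : Module.finrank ℝ W = 1) :
    ∃ v : g, v ∈ W ∧ v ≠ 0 ∧ W = Submodule.span ℝ {v} := by
  obtain ⟨v, hv0, hv⟩ := finrank_eq_one_iff'.mp h
  refine ⟨(v : g), v.2, by simpa using hv0, le_antisymm ?_ ?_⟩
  · intro x hx
    obtain ⟨c, hc⟩ := hv ⟨x, hx⟩
    have : c • (v : g) = x := congrArg Subtype.val hc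
    rw [← this]
    exact Submodule.smul_mem _ _ (Submodule.mem_span_singleton_self _)
  · rw [Submodule.span_le, Set.singleton_subset_iff]; exact v.2

/-- The span of brackets of two one-dimensional spaces is spanned by the bracket of the
generators. -/
lemma aux_bracket_span {g : Type*} [LieRing g] [LieAlgebra ℝ g]
    {A B C : Submodule ℝ g} {a b : g}
    (hA : A = Submodule.span ℝ {a}) (hB : B = Submodule.span ℝ {b})
    (hspan : Submodule.span ℝ {z : g | ∃ x ∈ A, ∃ y ∈ B, ⁅x, y⁆ = z} = C)
    (hC : Module.finrank ℝ C = 1) :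
    ⁅a, b⁆ ≠ 0 ∧ C = Submodule.span ℝ {⁅a, b⁆} := by
  have hCeq : C = Submodule.span ℝ {⁅a, b⁆} := by
    rw [← hspan]
    apply le_antisymm
    · rw [Submodule.span_le]
      rintro z ⟨x, hx, y, hy, rfl⟩
      rw [hA, Submodule.mem_span_singleton] at hx
      rw [hB, Submodule.mem_span_singleton] at hy
      obtain ⟨cx, rfl⟩ := hx
      obtain ⟨cy, rfl⟩ := hy
      have : ⁅cx • a, cy • b⁆ = (cx * cy) • ⁅a, b⁆ := by
        rw [smul_lie, lie_smul, smul_smul]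
      rw [this]
      exact Submodule.smul_mem _ _ (Submodule.mem_span_singleton_self _)
    · rw [Submodule.span_le, Set.singleton_subset_iff]
      exact Submodule.subset_span ⟨a, by rw [hA]; exact Submodule.mem_span_singleton_self _,
        b, by rw [hB]; exact Submodule.mem_span_singleton_self _, rfl⟩
  refine ⟨fun h0 => ?_, hCeq⟩
  rw [h0] at hCeq
  simp only [Submodule.span_zero_singleton] at hCeq
  rw [hCeq] at hC
  simp at hC

/-- Classification of symbol algebras of non-degenerated parabolic (3,5,6)-distributions:
a graded real Lie algebra `g = g₋₁ ⊕ g₋₂ ⊕ g₋₃ ⊕ g₋₄ ⊕ g₋₅ ⊕ g₋₇` with one-dimensional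
pieces, generated by `g₋₁ ⊕ g₋₂ ⊕ g₋₃`, with `[g₋₁,g₋₂]=0`, `[g₋₁,g₋₃]=g₋₄`,
`[g₋₁,g₋₄]=0`, `[g₋₂,g₋₃]=g₋₅`, `[g₋₂,g₋₅]=g₋₇`, admits a basis `e₁,…,e₅,e₇`
(`eᵢ ∈ g₋ᵢ`) whose only nonzero brackets are `⁅e₁,e₃⁆=e₄`, `⁅e₂,e₃⁆=e₅`,
`⁅e₂,e₅⁆=e₇`, `⁅e₃,e₄⁆=d•e₇` with `d = 0` or `d = 1`; i.e. `g ≅ g⁰` or `g ≅ g¹`. -/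
theorem stmt_8 (g : Type*) [LieRing g] [LieAlgebra ℝ g] (V : ℕ → Submodule ℝ g)
    (hdim : ∀ i, i ∈ ({1, 2, 3, 4, 5, 7} : Set ℕ) → Module.finrank ℝ (V i) = 1)
    (hbot : ∀ i, i ∉ ({1, 2, 3, 4, 5, 7} : Set ℕ) → V i = ⊥)
    (hindep : iSupIndep V) (hsup : ⨆ i, V i = ⊤)
    (hgrade : ∀ i j, ∀ x ∈ V i, ∀ y ∈ V j, ⁅x, y⁆ ∈ V (i + j))
    (hgen : LieSubalgebra.lieSpan ℝ g ((V 1 ⊔ V 2 ⊔ V 3 : Submodule ℝ g) : Set g) = ⊤)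
    (h12 : ∀ x ∈ V 1, ∀ y ∈ V 2, ⁅x, y⁆ = 0)
    (h13 : Submodule.span ℝ {z : g | ∃ x ∈ V 1, ∃ y ∈ V 3, ⁅x, y⁆ = z} = V 4)
    (h14 : ∀ x ∈ V 1, ∀ y ∈ V 4, ⁅x, y⁆ = 0)
    (h23 : Submodule.span ℝ {z : g | ∃ x ∈ V 2, ∃ y ∈ V 3, ⁅x, y⁆ = z} = V 5)
    (h25 : Submodule.span ℝ {z : g | ∃ x ∈ V 2, ∃ y ∈ V 5, ⁅x, y⁆ = z} = V 7) :
    ∃ d : ℝ, (d = 0 ∨ d = 1) ∧ ∃ e₁ e₂ e₃ e₄ e₅ e₇ : g,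
      e₁ ∈ V 1 ∧ e₂ ∈ V 2 ∧ e₃ ∈ V 3 ∧ e₄ ∈ V 4 ∧ e₅ ∈ V 5 ∧ e₇ ∈ V 7 ∧
      LinearIndependent ℝ ![e₁, e₂, e₃, e₄, e₅, e₇] ∧
      Submodule.span ℝ {e₁, e₂, e₃, e₄, e₅, e₇} = ⊤ ∧
      ⁅e₁, e₃⁆ = e₄ ∧ ⁅e₂, e₃⁆ = e₅ ∧ ⁅e₂, e₅⁆ = e₇ ∧ ⁅e₃, e₄⁆ = d • e₇ ∧
      ⁅e₁, e₂⁆ = 0 ∧ ⁅e₁, e₄⁆ = 0 ∧ ⁅e₁, e₅⁆ = 0 ∧ ⁅e₁, e₇⁆ = 0 ∧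
      ⁅e₂, e₄⁆ = 0 ∧ ⁅e₂, e₇⁆ = 0 ∧ ⁅e₃, e₅⁆ = 0 ∧ ⁅e₃, e₇⁆ = 0 ∧
      ⁅e₄, e₅⁆ = 0 ∧ ⁅e₄, e₇⁆ = 0 ∧ ⁅e₅, e₇⁆ = 0 := by
  -- generators of the graded pieces
  obtain ⟨f₁, hf₁V, hf₁0, hV1⟩ := aux_span_of_finrank_one (V 1) (hdim 1 (by simp))
  obtain ⟨f₂, hf₂V, hf₂0, hV2⟩ := aux_span_of_finrank_one (V 2) (hdim 2 (by simp))
  obtain ⟨f₃, hf₃V, hf₃0, hV3⟩ := aux_span_of_finrank_one (V 3) (hdim 3 (by simp))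
  obtain ⟨hb₄0, hV4⟩ := aux_bracket_span hV1 hV3 h13 (hdim 4 (by simp))
  obtain ⟨hb₅0, hV5⟩ := aux_bracket_span hV2 hV3 h23 (hdim 5 (by simp))
  obtain ⟨hb₇0, hV7⟩ := aux_bracket_span hV2 hV5 h25 (hdim 7 (by simp))
  set b₄ := ⁅f₁, f₃⁆ with hb₄def
  set b₅ := ⁅f₂, f₃⁆ with hb₅def
  set b₇ := ⁅f₂, b₅⁆ with hb₇def
  have hb₄V : b₄ ∈ V 4 := hgrade 1 3 f₁ hf₁V f₃ hf₃V
  have hb₅V : b₅ ∈ V 5 := hgrade 2 3 f₂ hf₂V f₃ hf₃V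
  have hb₇V : b₇ ∈ V 7 := hgrade 2 5 f₂ hf₂V b₅ hb₅V
  -- the structure constant
  have h34 : ⁅f₃, b₄⁆ ∈ V 7 := hgrade 3 4 f₃ hf₃V b₄ hb₄V
  rw [hV7, Submodule.mem_span_singleton] at h34
  obtain ⟨c, hc⟩ := h34
  -- normalization
  set α : ℝ := if c = 0 then 1 else c⁻¹ with hαdef
  have hα0 : α ≠ 0 := by
    rcases eq_or_ne c 0 with h | h <;> simp [hαdef, h]
  set d : ℝ := if c = 0 then 0 else 1 with hddef
  have hαc : α * c = d := by
    rcases eq_or_ne c 0 with h | h <;> simp [hαdef, hddef, h]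
  refine ⟨d, by rcases eq_or_ne c 0 with h | h <;> simp [hddef, h],
    α • f₁, f₂, f₃, α • b₄, b₅, b₇, Submodule.smul_mem _ _ hf₁V, hf₂V, hf₃V,
    Submodule.smul_mem _ _ hb₄V, hb₅V, hb₇V, ?_, ?_, ?_, ?_, ?_, ?_, ?_, ?_, ?_, ?_, ?_, ?_,
    ?_, ?_, ?_, ?_, ?_⟩
  -- spans with rescaled generators
  case _ => -- linear independence
    have hinj : Function.Injective (![1, 2, 3, 4, 5, 7] : Fin 6 → ℕ) := by
      decide
    have hmem : ∀ i : Fin 6,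
        ![α • f₁, f₂, f₃, α • b₄, b₅, b₇] i ∈ (V ∘ ![1, 2, 3, 4, 5, 7]) i := by
      intro i
      fin_cases i
      · exact Submodule.smul_mem _ _ hf₁V
      · exact hf₂V
      · exact hf₃V
      · exact Submodule.smul_mem _ _ hb₄V
      · exact hb₅V
      · exact hb₇V
    have hne : ∀ i : Fin 6, ![α • f₁, f₂, f₃, α • b₄, b₅, b₇] i ≠ 0 := by
      intro i
      fin_cases i
      · exact smul_ne_zero hα0 hf₁0
      · exact hf₂0
      · exact hf₃0
      · exact smul_ne_zero hα0 hb₄0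
      · exact hb₅0
      · exact hb₇0
    exact (hindep.comp hinj).linearIndependent (V ∘ ![1, 2, 3, 4, 5, 7]) hmem hne
  case _ => -- span top
    rw [← top_le_iff, ← hsup]
    apply iSup_le
    intro i
    have hmem : ∀ x ∈ ({α • f₁, f₂, f₃, α • b₄, b₅, b₇} : Set g),
        x ∈ Submodule.span ℝ ({α • f₁, f₂, f₃, α • b₄, b₅, b₇} : Set g) :=
      fun x hx => Submodule.subset_span hx
    by_cases hi : i ∈ ({1, 2, 3, 4, 5, 7} : Set ℕ)
    · have key : ∀ (v : g), v ∈ Submodule.span ℝ ({α • f₁, f₂, f₃, α • b₄, b₅, b₇} : Set g) →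
          V i = Submodule.span ℝ {v} →
          V i ≤ Submodule.span ℝ ({α • f₁, f₂, f₃, α • b₄, b₅, b₇} : Set g) := by
        intro v hv hVi
        rw [hVi, Submodule.span_le, Set.singleton_subset_iff]
        exact hv
      have hsm : ∀ (v : g) (W : Submodule ℝ g), W = Submodule.span ℝ {v} →
          W = Submodule.span ℝ {α • v} := by
        intro v W hW
        rw [hW, Submodule.span_singleton_smul_eq (IsUnit.mk0 α hα0)]
      rcases hi with rfl | rfl | rfl | rfl | rfl | rfl
      · exact key _ (hmem _ (by simp)) (hsm f₁ _ hV1)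
      · exact key _ (hmem _ (by simp)) hV2
      · exact key _ (hmem _ (by simp)) hV3
      · exact key _ (hmem _ (by simp)) (hsm b₄ _ hV4)
      · exact key _ (hmem _ (by simp)) hV5
      · exact key _ (hmem _ (by simp)) hV7
    · rw [hbot i hi]; exact bot_le
  case _ => rw [smul_lie] -- ⁅e₁,e₃⁆ = e₄
  case _ => rfl
  case _ => rfl
  case _ => -- ⁅e₃, α • b₄⁆ = d • b₇
    rw [lie_smul, ← hc, smul_smul, hαc]
  case _ => -- ⁅e₁, e₂⁆
    rw [smul_lie, h12 f₁ hf₁V f₂ hf₂V, smul_zero]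
  case _ => -- ⁅e₁, e₄⁆
    rw [lie_smul, smul_lie, h14 f₁ hf₁V b₄ hb₄V, smul_zero, smul_zero]
  all_goals {
    rw [← Submodule.mem_bot (R := ℝ)]
    first
    | { rw [show (⊥ : Submodule ℝ g) = V 6 from (hbot 6 (by simp)).symm]
        first
        | exact hgrade 1 5 _ (Submodule.smul_mem _ _ hf₁V) _ hb₅V
        | exact hgrade 2 4 _ hf₂V _ (Submodule.smul_mem _ _ hb₄V) }
    | { rw [show (⊥ : Submodule ℝ g) = V 8 from (hbot 8 (by simp)).symm]
        first
        | exact hgrade 1 7 _ (Submodule.smul_mem _ _ hf₁V) _ hb₇V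
        | exact hgrade 3 5 _ hf₃V _ hb₅V }
    | { rw [show (⊥ : Submodule ℝ g) = V 9 from (hbot 9 (by simp)).symm]
        first
        | exact hgrade 2 7 _ hf₂V _ hb₇V
        | exact hgrade 4 5 _ (Submodule.smul_mem _ _ hb₄V) _ hb₅V }
    | { rw [show (⊥ : Submodule ℝ g) = V 10 from (hbot 10 (by simp)).symm]
        exact hgrade 3 7 _ hf₃V _ hb₇V }
    | { rw [show (⊥ : Submodule ℝ g) = V 11 from (hbot 11 (by simp)).symm]
        exact hgrade 4 7 _ (Submodule.smul_mem _ _ hb₄V) _ hb₇V }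
    | { rw [show (⊥ : Submodule ℝ g) = V 12 from (hbot 12 (by simp)).symm]
        exact hgrade 5 7 _ hb₅V _ hb₇V } }
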